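/- Let H be a Hopf algebra with invertible antipode S and B braided-commutative in right H-crossed modules. In the smash product B # H^{op}, the target map t_L(a) = a₍₀₎ ⊗ a₍₁₎ and S(a ⊗ h) = a₍₀₎ ◁ S⁻²(a₍₁₎) S⁻¹(h₂) ⊗ S⁻²(a₍₂₎) S⁻¹(h₁) satisfy S ∘ t_L = s_L, where s_L(a) = a ⊗ 1. -/

import Mathlib

open TensorProduct

noncomputable section

section Frozen

variable (k : Type) [Field k]
variable (H : Type) [Ring H] [HopfAlgebra k H]
variable (B : Type) [Ring B] [Algebra k B]
variable (act : B ⊗[k] H →ₗ[k] B) (coact : B →ₗ[k] B ⊗[k] H)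

/-- `(a ◁ h₂)₍₀₎ ⊗ h₁ · (a ◁ h₂)₍₁₎` for a right action `act` and right coaction `coact`. -/
def ydLHS (a : B) (h : H) : B ⊗[k] H :=
  (TensorProduct.map (LinearMap.id : B →ₗ[k] B) (LinearMap.mul' k H))
    ((TensorProduct.assoc k B H H)
      ((TensorProduct.map (TensorProduct.comm k H B).toLinearMap (LinearMap.id : H →ₗ[k] H))
        ((TensorProduct.assoc k H B H).symm
          ((TensorProduct.map (LinearMap.id : H →ₗ[k] H)
              (coact ∘ₗ act ∘ₗ TensorProduct.mk k B H a))
            (Coalgebra.comul (R := k) h)))))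

/-- `a₍₀₎ ◁ h₁ ⊗ a₍₁₎ · h₂`. -/
def ydRHS (a : B) (h : H) : B ⊗[k] H :=
  (TensorProduct.map act (LinearMap.mul' k H))
    ((TensorProduct.tensorTensorTensorComm k B H H H)
      (coact a ⊗ₜ[k] Coalgebra.comul (R := k) h))

/-- Iterated coaction `a ↦ (a₍₀₎ ⊗ a₍₁₎) ⊗ a₍₂₎`. -/
def coact2 : B →ₗ[k] (B ⊗[k] H) ⊗[k] H :=
  (TensorProduct.map coact (LinearMap.id : H →ₗ[k] H)) ∘ₗ coact

variable (Sinv : H →ₗ[k] H)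

/-- The antipode `S(a ⊗ h) = a₍₀₎ ◁ S⁻²(a₍₁₎) S⁻¹(h₂) ⊗ S⁻²(a₍₂₎) S⁻¹(h₁)` on `B # H^{op}`. -/
def smashS : B ⊗[k] H →ₗ[k] B ⊗[k] H :=
  (TensorProduct.map
      (act ∘ₗ
        (TensorProduct.map (LinearMap.id : B →ₗ[k] B) (LinearMap.mul' k H)) ∘ₗ
        (TensorProduct.map (LinearMap.id : B →ₗ[k] B)
          (TensorProduct.map (Sinv ∘ₗ Sinv) Sinv)) ∘ₗ
        (TensorProduct.assoc k B H H).toLinearMap)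
      (LinearMap.mul' k H ∘ₗ TensorProduct.map (Sinv ∘ₗ Sinv) Sinv)) ∘ₗ
  (TensorProduct.tensorTensorTensorComm k (B ⊗[k] H) H H H).toLinearMap ∘ₗ
  (TensorProduct.map (LinearMap.id : (B ⊗[k] H) ⊗[k] H →ₗ[k] (B ⊗[k] H) ⊗[k] H)
      (TensorProduct.comm k H H).toLinearMap) ∘ₗ
  (TensorProduct.map (coact2 k H B coact) (Coalgebra.comul (R := k)))


end Frozen


namespace SmashAux

section Conv

variable {k : Type} [Field k] {C A : Type} [AddCommGroup C] [Module k C] [Coalgebra k C]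
  [Ring A] [Algebra k A]

/-- Convolution product of linear maps from a coalgebra to an algebra. -/
def conv (f g : C →ₗ[k] A) : C →ₗ[k] A :=
  LinearMap.mul' k A ∘ₗ TensorProduct.map f g ∘ₗ Coalgebra.comul

/-- Convolution unit. -/
def convUnit : C →ₗ[k] A := Algebra.linearMap k A ∘ₗ Coalgebra.counit

lemma conv_apply_repr (f g : C →ₗ[k] A) (c : C) (r : Coalgebra.Repr k c (C × C)) :
    conv f g c = ∑ i ∈ r.index, f (r.left i) * g (r.right i) := by
  simp only [conv, LinearMap.comp_apply, ← r.eq, map_sum, TensorProduct.map_tmul,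
    LinearMap.mul'_apply]

lemma conv_assoc (f g h : C →ₗ[k] A) : conv (conv f g) h = conv f (conv g h) := by
  ext c
  set r := Coalgebra.Repr.arbitrary k c with hr
  have key := Coalgebra.sum_map_tmul_tmul_eq (R := k) f g h c (repr := r)
    (a₁ := fun i => Coalgebra.Repr.arbitrary k (r.left i))
    (a₂ := fun i => Coalgebra.Repr.arbitrary k (r.right i))
  have key2 := congrArg (LinearMap.mul' k A ∘ₗ LinearMap.lTensor A (LinearMap.mul' k A)) key
  simp only [map_sum, LinearMap.comp_apply, LinearMap.lTensor_tmul, LinearMap.mul'_apply] at key2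
  calc conv (conv f g) h c
      = ∑ i ∈ r.index, conv f g (r.left i) * h (r.right i) := conv_apply_repr _ _ _ r
    _ = ∑ i ∈ r.index, ∑ j ∈ (Coalgebra.Repr.arbitrary k (r.left i)).index,
          f ((Coalgebra.Repr.arbitrary k (r.left i)).left j) *
            (g ((Coalgebra.Repr.arbitrary k (r.left i)).right j) * h (r.right i)) := by
        refine Finset.sum_congr rfl fun i _ => ?_
        rw [conv_apply_repr f g _ (Coalgebra.Repr.arbitrary k (r.left i)), Finset.sum_mul]
        simp [mul_assoc]
    _ = ∑ i ∈ r.index, ∑ j ∈ (Coalgebra.Repr.arbitrary k (r.right i)).index,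
          f (r.left i) * (g ((Coalgebra.Repr.arbitrary k (r.right i)).left j) *
            h ((Coalgebra.Repr.arbitrary k (r.right i)).right j)) := key2.symm
    _ = conv f (conv g h) c := by
        rw [conv_apply_repr f (conv g h) c r]
        refine Finset.sum_congr rfl fun i _ => ?_
        rw [conv_apply_repr g h _ (Coalgebra.Repr.arbitrary k (r.right i)), Finset.mul_sum]

lemma conv_unit_right (f : C →ₗ[k] A) : conv f convUnit = f := by
  ext c
  set r := Coalgebra.Repr.arbitrary k c with hr
  have h1 := Coalgebra.sum_tmul_counit_eq (R := k) r
  have h2 := congrArg (TensorProduct.rid k C) h1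
  simp only [map_sum, TensorProduct.rid_tmul, one_smul] at h2
  rw [conv_apply_repr f convUnit c r]
  calc ∑ i ∈ r.index, f (r.left i) * convUnit (r.right i)
      = ∑ i ∈ r.index, Coalgebra.counit (R := k) (r.right i) • f (r.left i) := by
        refine Finset.sum_congr rfl fun i _ => ?_
        simp [convUnit, Algebra.smul_def, Algebra.commutes, mul_comm]
    _ = f (∑ i ∈ r.index, Coalgebra.counit (R := k) (r.right i) • r.left i) := by
        simp [map_sum]
    _ = f c := by rw [h2]

lemma conv_unit_left (f : C →ₗ[k] A) : conv convUnit f = f := by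
  ext c
  set r := Coalgebra.Repr.arbitrary k c with hr
  have h1 := Coalgebra.sum_counit_tmul_eq (R := k) r
  have h2 := congrArg (TensorProduct.lid k C) h1
  simp only [map_sum, TensorProduct.lid_tmul, one_smul] at h2
  rw [conv_apply_repr convUnit f c r]
  calc ∑ i ∈ r.index, convUnit (r.left i) * f (r.right i)
      = ∑ i ∈ r.index, Coalgebra.counit (R := k) (r.left i) • f (r.right i) := by
        refine Finset.sum_congr rfl fun i _ => ?_
        simp [convUnit, Algebra.smul_def]
    _ = f (∑ i ∈ r.index, Coalgebra.counit (R := k) (r.left i) • r.right i) := by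
        simp [map_sum]
    _ = f c := by rw [h2]

lemma conv_inv_unique {F M G : C →ₗ[k] A} (h1 : conv F M = convUnit)
    (h2 : conv M G = convUnit) : F = G := by
  have := conv_assoc F M G
  rw [h1, h2, conv_unit_right, conv_unit_left] at this
  exact this.symm

end Conv

end SmashAux
section Antipode

variable {k : Type} [Field k] {H : Type} [Ring H] [HopfAlgebra k H]

lemma antipode_one : HopfAlgebra.antipode (R := k) (1 : H) = 1 := by
  have := HopfAlgebra.mul_antipode_rTensor_comul_apply (R := k) (1 : H)
  rw [Bialgebra.comul_one, Algebra.TensorProduct.one_def] at this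
  simpa using this

lemma P1 (X Y : H ⊗[k] H) :
    LinearMap.mul' k H
      ((TensorProduct.map ((HopfAlgebra.antipode (R := k)) ∘ₗ LinearMap.mul' k H)
          (LinearMap.mul' k H)) (TensorProduct.tensorTensorTensorComm k H H H H (X ⊗ₜ[k] Y))) =
    LinearMap.mul' k H
      ((TensorProduct.map (HopfAlgebra.antipode (R := k)) LinearMap.id) (X * Y)) := by
  induction X using TensorProduct.induction_on with
  | zero => simp
  | tmul x₁ x₂ =>
    induction Y using TensorProduct.induction_on with
    | zero => simp
    | tmul y₁ y₂ =>
      simp [Algebra.TensorProduct.tmul_mul_tmul]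
    | add Y₁ Y₂ hY₁ hY₂ =>
      simp only [tmul_add, map_add, mul_add, hY₁, hY₂]
  | add X₁ X₂ hX₁ hX₂ =>
    simp only [add_tmul, map_add, add_mul, hX₁, hX₂]

lemma antipode_mul (a b : H) :
    HopfAlgebra.antipode (R := k) (a * b) =
      HopfAlgebra.antipode (R := k) b * HopfAlgebra.antipode (R := k) a := by
  have hFG : ((HopfAlgebra.antipode (R := k)) ∘ₗ LinearMap.mul' k H : H ⊗[k] H →ₗ[k] H) =
      (LinearMap.mul' k H ∘ₗ TensorProduct.map (HopfAlgebra.antipode (R := k))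
        (HopfAlgebra.antipode (R := k)) ∘ₗ (TensorProduct.comm k H H).toLinearMap) := by
    apply SmashAux.conv_inv_unique (M := LinearMap.mul' k H)
    · -- conv F M = convUnit
      apply TensorProduct.ext'
      intro x y
      have h1 : Coalgebra.comul (R := k) (x ⊗ₜ[k] y) =
          TensorProduct.tensorTensorTensorComm k H H H H
            (Coalgebra.comul (R := k) x ⊗ₜ[k] Coalgebra.comul (R := k) y) := rfl
      simp only [SmashAux.conv, LinearMap.comp_apply]
      rw [h1]
      rw [P1]
      rw [← Bialgebra.comul_mul (R := k)]
      have h2 : (TensorProduct.map (HopfAlgebra.antipode (R := k) : H →ₗ[k] H)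
            (LinearMap.id : H →ₗ[k] H)) =
          LinearMap.rTensor H (HopfAlgebra.antipode (R := k) : H →ₗ[k] H) := rfl
      rw [h2, HopfAlgebra.mul_antipode_rTensor_comul_apply]
      have hcu : Coalgebra.counit (R := k) (x ⊗ₜ[k] y) =
          Coalgebra.counit (R := k) x * Coalgebra.counit (R := k) y := by
          rw [TensorProduct.counit_tmul, smul_eq_mul, mul_comm]
      simp [SmashAux.convUnit, hcu, Bialgebra.counit_mul]
    · -- conv M G = convUnit
      apply TensorProduct.ext'
      intro x y
      set rx := Coalgebra.Repr.arbitrary k x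
      set ry := Coalgebra.Repr.arbitrary k y
      have h1 : Coalgebra.comul (R := k) (x ⊗ₜ[k] y) =
          ∑ i ∈ rx.index, ∑ j ∈ ry.index,
            (rx.left i ⊗ₜ[k] ry.left j) ⊗ₜ[k] (rx.right i ⊗ₜ[k] ry.right j) := by
        simp only [TensorProduct.comul_tmul, LinearMap.comp_apply,
          TensorProduct.map_tmul, ← rx.eq, ← ry.eq, TensorProduct.sum_tmul,
          TensorProduct.tmul_sum, map_sum]
        rw [Finset.sum_comm]
        simp [TensorProduct.tensorTensorTensorComm_tmul,
          TensorProduct.AlgebraTensorModule.tensorTensorTensorComm_tmul]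
      simp only [SmashAux.conv, LinearMap.comp_apply]
      rw [h1]
      simp only [map_sum, TensorProduct.map_tmul, LinearMap.comp_apply,
        LinearEquiv.coe_coe, TensorProduct.comm_tmul, LinearMap.mul'_apply]
      have inner : ∀ i ∈ rx.index,
          ∑ j ∈ ry.index, rx.left i * ry.left j *
            (HopfAlgebra.antipode (R := k) (ry.right j) *
              HopfAlgebra.antipode (R := k) (rx.right i)) =
          Coalgebra.counit (R := k) y •
            (rx.left i * HopfAlgebra.antipode (R := k) (rx.right i)) := by
        intro i _
        have : ∀ j, rx.left i * ry.left j *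
            (HopfAlgebra.antipode (R := k) (ry.right j) *
              HopfAlgebra.antipode (R := k) (rx.right i)) =
            rx.left i * ((ry.left j * HopfAlgebra.antipode (R := k) (ry.right j)) *
              HopfAlgebra.antipode (R := k) (rx.right i)) := by
          intro j; simp only [mul_assoc]
        simp only [this, ← Finset.mul_sum, ← Finset.sum_mul]
        rw [HopfAlgebra.sum_mul_antipode_eq_smul (repr := ry)]
        rw [smul_mul_assoc, one_mul, mul_smul_comm]
      rw [Finset.sum_congr rfl inner, ← Finset.smul_sum,
        HopfAlgebra.sum_mul_antipode_eq_smul (repr := rx)]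
      have hcu : Coalgebra.counit (R := k) (x ⊗ₜ[k] y) =
          Coalgebra.counit (R := k) x * Coalgebra.counit (R := k) y := by
          rw [TensorProduct.counit_tmul, smul_eq_mul, mul_comm]
      simp only [SmashAux.convUnit, LinearMap.comp_apply, hcu, smul_smul,
        Algebra.smul_def, Algebra.linearMap_apply, map_mul]
      rw [mul_one]
      exact Algebra.commutes _ _
  have := congrArg (fun f : H ⊗[k] H →ₗ[k] H => f (a ⊗ₜ[k] b)) hFG
  simpa using this

end Antipode
section SinvPart

variable {k : Type} [Field k] {H : Type} [Ring H] [HopfAlgebra k H]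
variable (Sinv : H →ₗ[k] H)

lemma Sinv_one (hS1 : ∀ h : H, Sinv (HopfAlgebra.antipode (R := k) h) = h) :
    Sinv (1 : H) = 1 := by
  have := hS1 1
  rwa [antipode_one (k := k)] at this

lemma Sinv_mul (hS1 : ∀ h : H, Sinv (HopfAlgebra.antipode (R := k) h) = h)
    (hS2 : ∀ h : H, HopfAlgebra.antipode (R := k) (Sinv h) = h) (x y : H) :
    Sinv (x * y) = Sinv y * Sinv x := by
  have hxy : x * y = HopfAlgebra.antipode (R := k) (Sinv y * Sinv x) := by
    rw [antipode_mul, hS2, hS2]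
  rw [hxy, hS1]

lemma L1_map (hS1 : ∀ h : H, Sinv (HopfAlgebra.antipode (R := k) h) = h)
    (hS2 : ∀ h : H, HopfAlgebra.antipode (R := k) (Sinv h) = h) :
    LinearMap.mul' k H ∘ₗ TensorProduct.map (Sinv ∘ₗ Sinv) Sinv ∘ₗ
      (Coalgebra.comul (R := k) (A := H)) = Algebra.linearMap k H ∘ₗ Coalgebra.counit := by
  ext h
  set r := Coalgebra.Repr.arbitrary k h with hr
  have claimA : ∑ i ∈ r.index, r.right i * Sinv (r.left i) =
      Coalgebra.counit (R := k) h • (1 : H) := by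
    have h0 := HopfAlgebra.sum_mul_antipode_eq_smul (R := k) (repr := r)
    have h1 := congrArg Sinv h0
    simp only [map_sum, map_smul] at h1
    rw [Sinv_one Sinv hS1] at h1
    calc ∑ i ∈ r.index, r.right i * Sinv (r.left i)
        = ∑ i ∈ r.index, Sinv (r.left i * HopfAlgebra.antipode (R := k) (r.right i)) := by
          refine Finset.sum_congr rfl fun i _ => ?_
          rw [Sinv_mul Sinv hS1 hS2, hS1]
      _ = Coalgebra.counit (R := k) h • (1 : H) := h1
  calc (LinearMap.mul' k H ∘ₗ TensorProduct.map (Sinv ∘ₗ Sinv) Sinv ∘ₗ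
        (Coalgebra.comul (R := k) (A := H))) h
      = ∑ i ∈ r.index, Sinv (Sinv (r.left i)) * Sinv (r.right i) := by
        simp only [LinearMap.comp_apply, ← r.eq, map_sum, TensorProduct.map_tmul,
          LinearMap.mul'_apply]
    _ = ∑ i ∈ r.index, Sinv (r.right i * Sinv (r.left i)) := by
        refine Finset.sum_congr rfl fun i _ => ?_
        rw [Sinv_mul Sinv hS1 hS2]
    _ = Sinv (∑ i ∈ r.index, r.right i * Sinv (r.left i)) := (map_sum Sinv _ _).symm
    _ = Coalgebra.counit (R := k) h • (1 : H) := by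
        rw [claimA, map_smul, Sinv_one Sinv hS1]
    _ = (Algebra.linearMap k H ∘ₗ Coalgebra.counit) h := by
        simp [Algebra.smul_def]

end SinvPart
set_option maxHeartbeats 1000000
set_option synthInstance.maxHeartbeats 400000

section MainAux

variable {k : Type} [Field k]
variable {H : Type} [Ring H] [HopfAlgebra k H]
variable {B : Type} [Ring B] [Algebra k B]

/-- The map `G(x ⊗ y) = S⁻²(x) S⁻¹(y)`. -/
def Gm (Sinv : H →ₗ[k] H) : H ⊗[k] H →ₗ[k] H :=
  LinearMap.mul' k H ∘ₗ TensorProduct.map (Sinv ∘ₗ Sinv) Sinv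

/-- Iterated comultiplication `h ↦ h₁ ⊗ (h₂ ⊗ h₃)`. -/
def Tm : H →ₗ[k] H ⊗[k] (H ⊗[k] H) :=
  TensorProduct.map LinearMap.id (Coalgebra.comul (R := k)) ∘ₗ Coalgebra.comul

/-- The shuffle `h₁ ⊗ (x ⊗ (y ⊗ z)) ↦ (h₁ ⊗ z) ⊗ (x ⊗ y)`. -/
def sig : H ⊗[k] (H ⊗[k] (H ⊗[k] H)) →ₗ[k] (H ⊗[k] H) ⊗[k] (H ⊗[k] H) :=
  (TensorProduct.tensorTensorTensorComm k H H H H).toLinearMap ∘ₗ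
    (TensorProduct.map LinearMap.id (TensorProduct.comm k H H).toLinearMap) ∘ₗ
    (TensorProduct.assoc k H H (H ⊗[k] H)).symm.toLinearMap

/-- The shuffle `(u ⊗ M) ⊗ t ↦ (u ⊗ t) ⊗ M`. -/
def psi2 : (H ⊗[k] (H ⊗[k] H)) ⊗[k] H →ₗ[k] (H ⊗[k] H) ⊗[k] (H ⊗[k] H) :=
  (TensorProduct.assoc k H H (H ⊗[k] H)).symm.toLinearMap ∘ₗ
    (TensorProduct.map LinearMap.id (TensorProduct.comm k (H ⊗[k] H) H).toLinearMap) ∘ₗ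
    (TensorProduct.assoc k H (H ⊗[k] H) H).toLinearMap

/-- The shuffle `(u ⊗ g) ⊗ t ↦ (u ⊗ t) ⊗ g`. -/
def phi : (H ⊗[k] H) ⊗[k] H →ₗ[k] (H ⊗[k] H) ⊗[k] H :=
  (TensorProduct.assoc k H H H).symm.toLinearMap ∘ₗ
    (TensorProduct.map LinearMap.id (TensorProduct.comm k H H).toLinearMap) ∘ₗ
    (TensorProduct.assoc k H H H).toLinearMap

/-- `R`, the pure-`H` part of the composite. -/
def Rm (Sinv : H →ₗ[k] H) : H →ₗ[k] H ⊗[k] H :=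
  (TensorProduct.map (Gm Sinv) (Gm Sinv)) ∘ₗ sig ∘ₗ
    (TensorProduct.map LinearMap.id Tm) ∘ₗ Coalgebra.comul

/-- `ν(h) = ε(h) • (1 ⊗ 1)` as a composite. -/
def nu : H →ₗ[k] H ⊗[k] H :=
  ((TensorProduct.mk k H H).flip 1) ∘ₗ Algebra.linearMap k H ∘ₗ Coalgebra.counit

lemma NAT8 : sig ∘ₗ (TensorProduct.map (LinearMap.id : H →ₗ[k] H)
      (TensorProduct.assoc k H H H).toLinearMap) =
    psi2 ∘ₗ (TensorProduct.assoc k H (H ⊗[k] H) H).symm.toLinearMap := by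
  apply TensorProduct.ext'
  intro u ξ
  induction ξ using TensorProduct.induction_on with
  | zero => simp
  | tmul w t =>
    induction w using TensorProduct.induction_on with
    | zero => simp [TensorProduct.tmul_zero, TensorProduct.zero_tmul]
    | tmul m₁ m₂ => simp [sig, psi2]
    | add w₁ w₂ h₁ h₂ =>
      simp only [TensorProduct.add_tmul, TensorProduct.tmul_add, map_add, h₁, h₂]
  | add ξ₁ ξ₂ h₁ h₂ =>
    simp only [TensorProduct.tmul_add, map_add, h₁, h₂]

lemma NAT9 (f g : H ⊗[k] H →ₗ[k] H) :
    (TensorProduct.map f g) ∘ₗ psi2 =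
    (TensorProduct.map f (LinearMap.id : H →ₗ[k] H)) ∘ₗ phi ∘ₗ
      (TensorProduct.map (TensorProduct.map (LinearMap.id : H →ₗ[k] H) g)
        (LinearMap.id : H →ₗ[k] H)) := by
  apply TensorProduct.ext'
  intro ζ t
  induction ζ using TensorProduct.induction_on with
  | zero => simp [TensorProduct.zero_tmul]
  | tmul u M => simp [psi2, phi]
  | add ζ₁ ζ₂ h₁ h₂ => simp only [TensorProduct.add_tmul, map_add, h₁, h₂]

lemma NAT10 (g : H ⊗[k] H →ₗ[k] H) :
    (TensorProduct.map (TensorProduct.map (LinearMap.id : H →ₗ[k] H) g)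
        (LinearMap.id : H →ₗ[k] H)) ∘ₗ
      (TensorProduct.assoc k H (H ⊗[k] H) H).symm.toLinearMap =
    (TensorProduct.assoc k H H H).symm.toLinearMap ∘ₗ
      (TensorProduct.map (LinearMap.id : H →ₗ[k] H)
        (TensorProduct.map g (LinearMap.id : H →ₗ[k] H))) := by
  apply TensorProduct.ext'
  intro u ξ
  induction ξ using TensorProduct.induction_on with
  | zero => simp
  | tmul M t => simp
  | add ξ₁ ξ₂ h₁ h₂ => simp only [TensorProduct.tmul_add, map_add, h₁, h₂]

lemma NAT11 (f : H ⊗[k] H →ₗ[k] H) :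
    (TensorProduct.map f (LinearMap.id : H →ₗ[k] H)) ∘ₗ phi ∘ₗ
      (TensorProduct.assoc k H H H).symm.toLinearMap ∘ₗ
      (TensorProduct.map (LinearMap.id : H →ₗ[k] H) ((TensorProduct.mk k H H) 1)) =
    ((TensorProduct.mk k H H).flip 1) ∘ₗ f := by
  apply TensorProduct.ext'
  intro u z
  simp [phi, TensorProduct.mk_apply]

end MainAux
section MainAux2

variable {k : Type} [Field k]
variable {H : Type} [Ring H] [HopfAlgebra k H]
variable {B : Type} [Ring B] [Algebra k B]

lemma mapIdComp {M P Q R' : Type} [AddCommGroup M] [AddCommGroup P] [AddCommGroup Q]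
    [AddCommGroup R'] [Module k M] [Module k P] [Module k Q] [Module k R']
    (f : P →ₗ[k] Q) (g : Q →ₗ[k] R') :
    TensorProduct.map (LinearMap.id : M →ₗ[k] M) (g ∘ₗ f) =
      TensorProduct.map LinearMap.id g ∘ₗ TensorProduct.map LinearMap.id f := by
  rw [← TensorProduct.map_comp, LinearMap.id_comp]

lemma mapCompId {M P Q R' : Type} [AddCommGroup M] [AddCommGroup P] [AddCommGroup Q]
    [AddCommGroup R'] [Module k M] [Module k P] [Module k Q] [Module k R']
    (f : P →ₗ[k] Q) (g : Q →ₗ[k] R') :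
    TensorProduct.map (g ∘ₗ f) (LinearMap.id : M →ₗ[k] M) =
      TensorProduct.map g LinearMap.id ∘ₗ TensorProduct.map f LinearMap.id := by
  rw [← TensorProduct.map_comp, LinearMap.id_comp]

lemma EQmk : (TensorProduct.map (Algebra.linearMap k H) (LinearMap.id : H →ₗ[k] H)) ∘ₗ
    ((TensorProduct.mk k k H) 1) = (TensorProduct.mk k H H) 1 := by
  ext h
  simp

lemma hT_eq : (Tm : H →ₗ[k] H ⊗[k] (H ⊗[k] H)) =
    (TensorProduct.assoc k H H H).toLinearMap ∘ₗ
      (TensorProduct.map (Coalgebra.comul (R := k)) LinearMap.id) ∘ₗ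
      Coalgebra.comul := by
  exact (Coalgebra.coassoc (R := k)).symm

lemma hGJ (Sinv : H →ₗ[k] H)
    (hS1 : ∀ h : H, Sinv (HopfAlgebra.antipode (R := k) h) = h)
    (hS2 : ∀ h : H, HopfAlgebra.antipode (R := k) (Sinv h) = h) :
    (TensorProduct.map (Gm Sinv) (LinearMap.id : H →ₗ[k] H)) ∘ₗ
      (TensorProduct.map (Coalgebra.comul (R := k) (A := H)) (LinearMap.id : H →ₗ[k] H)) =
    TensorProduct.map (Algebra.linearMap k H ∘ₗ Coalgebra.counit)
      (LinearMap.id : H →ₗ[k] H) := by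
  rw [← TensorProduct.map_comp, LinearMap.id_comp]
  congr 1
  rw [show Gm Sinv ∘ₗ Coalgebra.comul (R := k) (A := H) =
    LinearMap.mul' k H ∘ₗ TensorProduct.map (Sinv ∘ₗ Sinv) Sinv ∘ₗ Coalgebra.comul from rfl]
  exact L1_map Sinv hS1 hS2

lemma Rnu (Sinv : H →ₗ[k] H)
    (hS1 : ∀ h : H, Sinv (HopfAlgebra.antipode (R := k) h) = h)
    (hS2 : ∀ h : H, HopfAlgebra.antipode (R := k) (Sinv h) = h) :
    (Rm Sinv : H →ₗ[k] H ⊗[k] H) = nu := by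
  ext h
  set x := Coalgebra.comul (R := k) h with hx
  set Y := (TensorProduct.map (LinearMap.id : H →ₗ[k] H) (Coalgebra.comul (R := k))) x with hY
  set Z := (TensorProduct.map (LinearMap.id : H →ₗ[k] H)
    (TensorProduct.map (Coalgebra.comul (R := k)) LinearMap.id)) Y with hZ
  have e0 : Rm Sinv h =
      (TensorProduct.map (Gm Sinv) (Gm Sinv))
        (sig ((TensorProduct.map LinearMap.id Tm) x)) := rfl
  have e2 : (TensorProduct.map (LinearMap.id : H →ₗ[k] H) Tm) x =
      (TensorProduct.map LinearMap.id (TensorProduct.assoc k H H H).toLinearMap) Z := by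
    rw [hT_eq,
      mapIdComp (M := H)
        (TensorProduct.map (Coalgebra.comul (R := k)) (LinearMap.id : H →ₗ[k] H) ∘ₗ
          Coalgebra.comul) (TensorProduct.assoc k H H H).toLinearMap,
      mapIdComp (M := H) (Coalgebra.comul (R := k) (A := H))
        (TensorProduct.map (Coalgebra.comul (R := k)) (LinearMap.id : H →ₗ[k] H))]
    simp only [LinearMap.comp_apply, hY, hZ]
  have e3 : sig ((TensorProduct.map LinearMap.id (TensorProduct.assoc k H H H).toLinearMap) Z) =
      psi2 ((TensorProduct.assoc k H (H ⊗[k] H) H).symm.toLinearMap Z) := by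
    have := LinearMap.congr_fun (NAT8 (k := k) (H := H)) Z
    simpa using this
  have e4 : (TensorProduct.map (Gm Sinv) (Gm Sinv))
        (psi2 ((TensorProduct.assoc k H (H ⊗[k] H) H).symm.toLinearMap Z)) =
      (TensorProduct.map (Gm Sinv) LinearMap.id)
        (phi ((TensorProduct.map (TensorProduct.map LinearMap.id (Gm Sinv)) LinearMap.id)
          ((TensorProduct.assoc k H (H ⊗[k] H) H).symm.toLinearMap Z))) := by
    have := LinearMap.congr_fun (NAT9 (Gm Sinv) (Gm Sinv))
      ((TensorProduct.assoc k H (H ⊗[k] H) H).symm.toLinearMap Z)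
    simpa using this
  have e5 : (TensorProduct.map (TensorProduct.map LinearMap.id (Gm Sinv)) LinearMap.id)
        ((TensorProduct.assoc k H (H ⊗[k] H) H).symm.toLinearMap Z) =
      (TensorProduct.assoc k H H H).symm.toLinearMap
        ((TensorProduct.map LinearMap.id (TensorProduct.map (Gm Sinv) LinearMap.id)) Z) := by
    have := LinearMap.congr_fun (NAT10 (Gm Sinv)) Z
    simpa using this
  have e6 : (TensorProduct.map (LinearMap.id : H →ₗ[k] H)
        (TensorProduct.map (Gm Sinv) LinearMap.id)) Z =
      (TensorProduct.map LinearMap.id ((TensorProduct.mk k H H) 1)) x := by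
    rw [hZ]
    have c1 := LinearMap.congr_fun
      ((mapIdComp (M := H) (TensorProduct.map (Coalgebra.comul (R := k) (A := H))
          (LinearMap.id : H →ₗ[k] H))
        (TensorProduct.map (Gm Sinv) (LinearMap.id : H →ₗ[k] H))).symm) Y
    simp only [LinearMap.comp_apply] at c1
    rw [c1, congrArg (fun F => (TensorProduct.map (LinearMap.id : H →ₗ[k] H) F) Y)
      (hGJ Sinv hS1 hS2)]
    rw [congrArg (fun F => (TensorProduct.map (LinearMap.id : H →ₗ[k] H) F) Y)
      (mapCompId (M := H) (Coalgebra.counit (R := k) (A := H)) (Algebra.linearMap k H))]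
    have c2 := LinearMap.congr_fun
      (mapIdComp (M := H) (TensorProduct.map (Coalgebra.counit (R := k) (A := H))
          (LinearMap.id : H →ₗ[k] H))
        (TensorProduct.map (Algebra.linearMap k H) (LinearMap.id : H →ₗ[k] H))) Y
    simp only [LinearMap.comp_apply] at c2
    rw [c2]
    have c3 : (TensorProduct.map (Coalgebra.counit (R := k) (A := H))
        (LinearMap.id : H →ₗ[k] H) : H ⊗[k] H →ₗ[k] k ⊗[k] H) ∘ₗ Coalgebra.comul =
        (TensorProduct.mk k k H) 1 := Coalgebra.rTensor_counit_comp_comul (R := k)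
    have c4 := LinearMap.congr_fun
      ((mapIdComp (M := H) (Coalgebra.comul (R := k) (A := H))
        (TensorProduct.map (Coalgebra.counit (R := k) (A := H))
          (LinearMap.id : H →ₗ[k] H))).symm) x
    simp only [LinearMap.comp_apply] at c4
    rw [hY, c4, congrArg (fun F => (TensorProduct.map (LinearMap.id : H →ₗ[k] H) F) x) c3]
    have c5 := LinearMap.congr_fun
      ((mapIdComp (M := H) ((TensorProduct.mk k k H) 1)
        (TensorProduct.map (Algebra.linearMap k H) (LinearMap.id : H →ₗ[k] H))).symm) x
    simp only [LinearMap.comp_apply] at c5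
    rw [c5, congrArg (fun F => (TensorProduct.map (LinearMap.id : H →ₗ[k] H) F) x) EQmk]
  have e9 : (TensorProduct.map (Gm Sinv) LinearMap.id)
        (phi ((TensorProduct.assoc k H H H).symm.toLinearMap
          ((TensorProduct.map LinearMap.id ((TensorProduct.mk k H H) 1)) x))) =
      ((TensorProduct.mk k H H).flip 1) (Gm Sinv x) := by
    have := LinearMap.congr_fun (NAT11 (Gm Sinv)) x
    simpa using this
  have e10 : Gm Sinv x = (Algebra.linearMap k H) (Coalgebra.counit (R := k) h) := by
    have := LinearMap.congr_fun (L1_map Sinv hS1 hS2) h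
    simpa [Gm, hx] using this
  rw [e0, e2, e3, e4, e5, e6, e9, e10]
  rfl

end MainAux2
section MainAux3

variable {k : Type} [Field k]
variable {H : Type} [Ring H] [HopfAlgebra k H]
variable {B : Type} [Ring B] [Algebra k B]

lemma NATB1 (coact : B →ₗ[k] B ⊗[k] H) :
    (TensorProduct.map (TensorProduct.map coact (LinearMap.id : H →ₗ[k] H))
        (Coalgebra.comul (R := k) (A := H))) ∘ₗ
      (TensorProduct.assoc k B H H).symm.toLinearMap =
    (TensorProduct.assoc k (B ⊗[k] H) H (H ⊗[k] H)).symm.toLinearMap ∘ₗ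
      (TensorProduct.map coact (TensorProduct.map (LinearMap.id : H →ₗ[k] H)
        (Coalgebra.comul (R := k)))) := by
  apply TensorProduct.ext'
  intro b w
  induction w using TensorProduct.induction_on with
  | zero => simp
  | tmul u v => simp
  | add w₁ w₂ h₁ h₂ => simp only [TensorProduct.tmul_add, map_add, h₁, h₂]

lemma NAT1 (act : B ⊗[k] H →ₗ[k] B) (Sinv : H →ₗ[k] H) :
    (TensorProduct.map
        (act ∘ₗ (TensorProduct.map (LinearMap.id : B →ₗ[k] B) (LinearMap.mul' k H)) ∘ₗ
          (TensorProduct.map (LinearMap.id : B →ₗ[k] B)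
            (TensorProduct.map (Sinv ∘ₗ Sinv) Sinv)) ∘ₗ
          (TensorProduct.assoc k B H H).toLinearMap)
        (LinearMap.mul' k H ∘ₗ TensorProduct.map (Sinv ∘ₗ Sinv) Sinv)) ∘ₗ
      (TensorProduct.tensorTensorTensorComm k (B ⊗[k] H) H H H).toLinearMap ∘ₗ
      (TensorProduct.map (LinearMap.id : (B ⊗[k] H) ⊗[k] H →ₗ[k] (B ⊗[k] H) ⊗[k] H)
        (TensorProduct.comm k H H).toLinearMap) ∘ₗ
      (TensorProduct.assoc k (B ⊗[k] H) H (H ⊗[k] H)).symm.toLinearMap ∘ₗ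
      (TensorProduct.map (LinearMap.id : B ⊗[k] H →ₗ[k] B ⊗[k] H) Tm) ∘ₗ
      (TensorProduct.assoc k B H H).symm.toLinearMap ∘ₗ
      (TensorProduct.map (LinearMap.id : B →ₗ[k] B) (Coalgebra.comul (R := k)))
    = (TensorProduct.map act (LinearMap.id : H →ₗ[k] H)) ∘ₗ
      (TensorProduct.assoc k B H H).symm.toLinearMap ∘ₗ
      (TensorProduct.map (LinearMap.id : B →ₗ[k] B) (Rm Sinv)) := by
  apply TensorProduct.ext'
  intro b h
  simp only [LinearMap.comp_apply, LinearEquiv.coe_coe, TensorProduct.map_tmul,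
    LinearMap.id_coe, id_eq]
  have gen : ∀ w : H ⊗[k] H,
      (TensorProduct.map
        (act ∘ₗ (TensorProduct.map (LinearMap.id : B →ₗ[k] B) (LinearMap.mul' k H)) ∘ₗ
          (TensorProduct.map (LinearMap.id : B →ₗ[k] B)
            (TensorProduct.map (Sinv ∘ₗ Sinv) Sinv)) ∘ₗ
          (TensorProduct.assoc k B H H).toLinearMap)
        (LinearMap.mul' k H ∘ₗ TensorProduct.map (Sinv ∘ₗ Sinv) Sinv))
      ((TensorProduct.tensorTensorTensorComm k (B ⊗[k] H) H H H)
        ((TensorProduct.map (LinearMap.id : (B ⊗[k] H) ⊗[k] H →ₗ[k] (B ⊗[k] H) ⊗[k] H)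
          (TensorProduct.comm k H H).toLinearMap)
          ((TensorProduct.assoc k (B ⊗[k] H) H (H ⊗[k] H)).symm
            ((TensorProduct.map (LinearMap.id : B ⊗[k] H →ₗ[k] B ⊗[k] H) Tm)
              ((TensorProduct.assoc k B H H).symm (b ⊗ₜ[k] w)))))) =
      (TensorProduct.map act (LinearMap.id : H →ₗ[k] H))
        ((TensorProduct.assoc k B H H).symm
          (b ⊗ₜ[k] ((TensorProduct.map (Gm Sinv) (Gm Sinv))
            (sig ((TensorProduct.map (LinearMap.id : H →ₗ[k] H) Tm) w))))) := by
    intro w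
    induction w using TensorProduct.induction_on with
    | zero => simp
    | tmul u v =>
      have gen2 : ∀ t : H ⊗[k] (H ⊗[k] H),
          (TensorProduct.map
            (act ∘ₗ (TensorProduct.map (LinearMap.id : B →ₗ[k] B) (LinearMap.mul' k H)) ∘ₗ
              (TensorProduct.map (LinearMap.id : B →ₗ[k] B)
                (TensorProduct.map (Sinv ∘ₗ Sinv) Sinv)) ∘ₗ
              (TensorProduct.assoc k B H H).toLinearMap)
            (LinearMap.mul' k H ∘ₗ TensorProduct.map (Sinv ∘ₗ Sinv) Sinv))
          ((TensorProduct.tensorTensorTensorComm k (B ⊗[k] H) H H H)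
            ((TensorProduct.map (LinearMap.id : (B ⊗[k] H) ⊗[k] H →ₗ[k] (B ⊗[k] H) ⊗[k] H)
              (TensorProduct.comm k H H).toLinearMap)
              ((TensorProduct.assoc k (B ⊗[k] H) H (H ⊗[k] H)).symm
                ((b ⊗ₜ[k] u) ⊗ₜ[k] t)))) =
          (TensorProduct.map act (LinearMap.id : H →ₗ[k] H))
            ((TensorProduct.assoc k B H H).symm
              (b ⊗ₜ[k] ((TensorProduct.map (Gm Sinv) (Gm Sinv))
                (sig (u ⊗ₜ[k] t))))) := by
        intro t
        induction t using TensorProduct.induction_on with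
        | zero => simp [sig]
        | tmul x V =>
          induction V using TensorProduct.induction_on with
          | zero => simp [sig, TensorProduct.tmul_zero]
          | tmul y z => simp [sig, Gm, mul_assoc]
          | add V₁ V₂ h₁ h₂ =>
            simp only [TensorProduct.tmul_add, map_add, h₁, h₂]
        | add t₁ t₂ h₁ h₂ =>
          simp only [TensorProduct.tmul_add, map_add, h₁, h₂]
      simp only [TensorProduct.assoc_symm_tmul, TensorProduct.map_tmul, LinearMap.id_coe,
        id_eq]
      exact gen2 (Tm v)
    | add w₁ w₂ h₁ h₂ =>
      simp only [TensorProduct.tmul_add, map_add, h₁, h₂]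
  have := gen (Coalgebra.comul (R := k) h)
  rw [this]
  rfl

end MainAux3


variable (k : Type) [Field k]
variable (H : Type) [Ring H] [HopfAlgebra k H]
variable (B : Type) [Ring B] [Algebra k B]
variable (act : B ⊗[k] H →ₗ[k] B) (coact : B →ₗ[k] B ⊗[k] H)

variable (Sinv : H →ₗ[k] H)

/-- In the smash product `B # H^{op}`, the antipode
`S(a ⊗ h) = a₍₀₎ ◁ S⁻²(a₍₁₎) S⁻¹(h₂) ⊗ S⁻²(a₍₂₎) S⁻¹(h₁)` and the target map
`t_L(a) = a₍₀₎ ⊗ a₍₁₎` satisfy `S ∘ t_L = s_L`, where `s_L(a) = a ⊗ 1`. -/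
theorem smash_S_target_eq_source
    (hact_one : ∀ b : B, act (b ⊗ₜ[k] 1) = b)
    (hact_mul : ∀ (b : B) (g h : H), act (act (b ⊗ₜ[k] g) ⊗ₜ[k] h) = act (b ⊗ₜ[k] (g * h)))
    (hcoassoc : ∀ b : B,
      (TensorProduct.assoc k B H H)
          ((TensorProduct.map coact (LinearMap.id : H →ₗ[k] H)) (coact b)) =
        (TensorProduct.map (LinearMap.id : B →ₗ[k] B) (Coalgebra.comul (R := k))) (coact b))
    (hcounit : ∀ b : B,
      (TensorProduct.rid k B)
        ((TensorProduct.map (LinearMap.id : B →ₗ[k] B) (Coalgebra.counit (R := k)))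
          (coact b)) = b)
    (hact_alg : ∀ (a b : B) (h : H),
      act ((a * b) ⊗ₜ[k] h) =
        LinearMap.mul' k B
          ((TensorProduct.map (act ∘ₗ TensorProduct.mk k B H a)
              (act ∘ₗ TensorProduct.mk k B H b)) (Coalgebra.comul (R := k) h)))
    (hcoact_alg : ∀ a b : B, coact (a * b) = coact a * coact b)
    (hcoact_one : coact 1 = 1)
    (hYD : ∀ (a : B) (h : H), ydLHS k H B act coact a h = ydRHS k H B act coact a h)
    (hbc : ∀ a b : B,
      LinearMap.mul' k B
        ((TensorProduct.map (LinearMap.id : B →ₗ[k] B) (act ∘ₗ TensorProduct.mk k B H a))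
          (coact b)) = a * b)
    (hSinv₁ : ∀ h : H, Sinv (HopfAlgebra.antipode (R := k) h) = h)
    (hSinv₂ : ∀ h : H, HopfAlgebra.antipode (R := k) (Sinv h) = h)
    :
    ∀ a : B, smashS k H B act coact Sinv (coact a) = a ⊗ₜ[k] (1 : H) := by
  intro a
  -- unfold smashS
  simp only [smashS, LinearMap.comp_apply, LinearEquiv.coe_coe]
  -- step 1: split the first map
  have st1 : (TensorProduct.map (TensorProduct.map coact LinearMap.id) (Coalgebra.comul (R := k)))
        ((TensorProduct.map coact (LinearMap.id : H →ₗ[k] H)) (coact a)) =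
      (TensorProduct.map (coact2 k H B coact) (Coalgebra.comul (R := k))) (coact a) := by
    rw [← LinearMap.comp_apply, ← TensorProduct.map_comp]
    rfl
  rw [← st1]
  -- step 2: coassociativity of the coaction
  have st2 : (TensorProduct.map coact (LinearMap.id : H →ₗ[k] H)) (coact a) =
      (TensorProduct.assoc k B H H).symm
        ((TensorProduct.map (LinearMap.id : B →ₗ[k] B) (Coalgebra.comul (R := k)))
          (coact a)) := by
    rw [← hcoassoc a, LinearEquiv.symm_apply_apply]
  rw [st2]
  -- step 3: shuffle naturality of the coaction map
  have st3 := LinearMap.congr_fun (NATB1 (k := k) (H := H) (B := B) coact)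
    ((TensorProduct.map (LinearMap.id : B →ₗ[k] B) (Coalgebra.comul (R := k))) (coact a))
  simp only [LinearMap.comp_apply, LinearEquiv.coe_coe] at st3
  rw [st3]
  -- step 4: recombine into `Tm`
  have st4 : (TensorProduct.map coact (TensorProduct.map (LinearMap.id : H →ₗ[k] H)
        (Coalgebra.comul (R := k))))
        ((TensorProduct.map (LinearMap.id : B →ₗ[k] B) (Coalgebra.comul (R := k)))
          (coact a)) =
      (TensorProduct.map (LinearMap.id : B ⊗[k] H →ₗ[k] B ⊗[k] H) Tm)
        ((TensorProduct.map coact (LinearMap.id : H →ₗ[k] H)) (coact a)) := by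
    have c1 : (TensorProduct.map coact (TensorProduct.map (LinearMap.id : H →ₗ[k] H)
          (Coalgebra.comul (R := k)))) ∘ₗ
          (TensorProduct.map (LinearMap.id : B →ₗ[k] B) (Coalgebra.comul (R := k))) =
        (TensorProduct.map (LinearMap.id : B ⊗[k] H →ₗ[k] B ⊗[k] H) Tm) ∘ₗ
          (TensorProduct.map coact (LinearMap.id : H →ₗ[k] H)) := by
      rw [← TensorProduct.map_comp, ← TensorProduct.map_comp]
      rfl
    have := LinearMap.congr_fun c1 (coact a)
    simpa only [LinearMap.comp_apply] using this
  rw [st4, st2]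
  -- step 5: apply the big naturality lemma
  have st5 := LinearMap.congr_fun (NAT1 (k := k) (H := H) (B := B) act Sinv) (coact a)
  simp only [LinearMap.comp_apply, LinearEquiv.coe_coe] at st5
  rw [st5]
  -- step 6: the pure Hopf-algebra part collapses
  rw [Rnu Sinv hSinv₁ hSinv₂]
  -- step 7: counit property of the coaction
  have hnu : TensorProduct.map (LinearMap.id : B →ₗ[k] B) (nu (k := k) (H := H)) =
      (TensorProduct.map LinearMap.id ((TensorProduct.mk k H H).flip 1)) ∘ₗ
        (TensorProduct.map LinearMap.id (Algebra.linearMap k H)) ∘ₗ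
        (TensorProduct.map (LinearMap.id : B →ₗ[k] B) (Coalgebra.counit (R := k))) := by
    simp only [nu]
    rw [mapIdComp (M := B) (Algebra.linearMap k H ∘ₗ Coalgebra.counit)
        ((TensorProduct.mk k H H).flip 1),
      mapIdComp (M := B) (Coalgebra.counit (R := k) (A := H)) (Algebra.linearMap k H)]
  rw [hnu]
  simp only [LinearMap.comp_apply]
  have st7 : (TensorProduct.map (LinearMap.id : B →ₗ[k] B) (Coalgebra.counit (R := k)))
      (coact a) = a ⊗ₜ[k] (1 : k) := by
    rw [← TensorProduct.rid_symm_apply, LinearEquiv.eq_symm_apply]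
    exact hcounit a
  rw [st7]
  simp [hact_one]
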